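/- Let θ be a formal power series with nonnegative coefficients satisfying θ'·θ' ≪ θ' (with θ' the formal derivative), and let Θ(τ) = θ(τ/R) for R > 0. Then for every n ≥ 1 and ℓ ≥ 0, Σ_{ℓ₁+⋯+ℓₙ=ℓ} (ℓ!/(ℓ₁!⋯ℓₙ!)) Θ^{(ℓ₁+1)}(τ)⋯Θ^{(ℓₙ+1)}(τ) ≪ R^{-n+1} Θ^{(ℓ+1)}(τ). -/

import Mathlib

open PowerSeries

open Finset

open PowerSeries Finset

private lemma st12_coeff_derivativeFun (f : PowerSeries ℝ) (n : ℕ) :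
    coeff n (derivativeFun f) = coeff (n + 1) f * (n + 1) := coeff_derivative f n

private lemma st12_sum {α : Type*} (s : Finset α) (g : α → PowerSeries ℝ) :
    derivativeFun (∑ x ∈ s, g x) = ∑ x ∈ s, derivativeFun (g x) := by
  ext m
  rw [st12_coeff_derivativeFun, map_sum, map_sum, Finset.sum_mul]
  exact Finset.sum_congr rfl fun x _ => (st12_coeff_derivativeFun _ _).symm

private lemma iter_smul (c : ℝ) (f : PowerSeries ℝ) (k : ℕ) :
    derivativeFun^[k] (c • f) = c • derivativeFun^[k] f := by
  induction k with
  | zero => rfl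
  | succ k ih => rw [Function.iterate_succ_apply', Function.iterate_succ_apply', ih,
      derivativeFun_smul]

private lemma coeff_iter_mono {f g : PowerSeries ℝ}
    (h : ∀ m, coeff m f ≤ coeff m g) (k : ℕ) :
    ∀ m, coeff m (derivativeFun^[k] f) ≤ coeff m (derivativeFun^[k] g) := by
  induction k with
  | zero => simpa using h
  | succ k ih =>
    intro m
    rw [Function.iterate_succ_apply', Function.iterate_succ_apply', st12_coeff_derivativeFun,
      st12_coeff_derivativeFun]
    exact mul_le_mul_of_nonneg_right (ih (m + 1)) (by positivity)

private lemma leib (p q : PowerSeries ℝ) (k : ℕ) :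
    derivativeFun^[k] (p * q) = ∑ x ∈ Finset.HasAntidiagonal.antidiagonal k,
      (k.choose x.1 : ℝ) • (derivativeFun^[x.1] p * derivativeFun^[x.2] q) := by
  induction k with
  | zero => simp [Finset.Nat.antidiagonal_zero]
  | succ k ih =>
    rw [Function.iterate_succ_apply', ih, st12_sum]
    have hterm : ∀ x ∈ Finset.HasAntidiagonal.antidiagonal k,
        derivativeFun ((k.choose x.1 : ℝ) • (derivativeFun^[x.1] p * derivativeFun^[x.2] q)) =
          (k.choose x.1 : ℝ) • (derivativeFun^[x.1 + 1] p * derivativeFun^[x.2] q) +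
          (k.choose x.1 : ℝ) • (derivativeFun^[x.1] p * derivativeFun^[x.2 + 1] q) := by
      intro x _
      rw [derivativeFun_smul, derivativeFun_mul, smul_add, Function.iterate_succ_apply',
        Function.iterate_succ_apply', smul_eq_mul, smul_eq_mul]
      ring_nf
    rw [Finset.sum_congr rfl hterm, Finset.sum_add_distrib]
    have hS : (∑ x ∈ Finset.HasAntidiagonal.antidiagonal (k + 1),
          (k.choose x.1 : ℝ) • (derivativeFun^[x.1] p * derivativeFun^[x.2] q)) =
        ∑ x ∈ Finset.HasAntidiagonal.antidiagonal k,
          (k.choose x.1 : ℝ) • (derivativeFun^[x.1] p * derivativeFun^[x.2 + 1] q) := by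
      rw [Finset.Nat.sum_antidiagonal_succ']
      simp [Nat.choose_succ_self]
    have hS' : (∑ x ∈ Finset.HasAntidiagonal.antidiagonal (k + 1),
          (k.choose x.1 : ℝ) • (derivativeFun^[x.1] p * derivativeFun^[x.2] q)) =
        ((k.choose 0 : ℝ)) • (derivativeFun^[0] p * derivativeFun^[k + 1] q) +
        ∑ x ∈ Finset.HasAntidiagonal.antidiagonal k,
          (k.choose (x.1 + 1) : ℝ) • (derivativeFun^[x.1 + 1] p * derivativeFun^[x.2] q) := by
      rw [Finset.Nat.sum_antidiagonal_succ]
    rw [← hS, hS']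
    rw [Finset.Nat.sum_antidiagonal_succ (f := fun x =>
      ((k + 1).choose x.1 : ℝ) • (derivativeFun^[x.1] p * derivativeFun^[x.2] q))]
    simp only [Nat.choose_succ_succ, Nat.cast_add, add_smul, Nat.choose_zero_right,
      Nat.cast_one, Finset.sum_add_distrib]
    ring


private lemma st12_mul_nonneg {f g : PowerSeries ℝ} (hf : ∀ m, 0 ≤ coeff m f)
    (hg : ∀ m, 0 ≤ coeff m g) : ∀ m, 0 ≤ coeff m (f * g) := by
  intro m
  rw [coeff_mul]
  exact Finset.sum_nonneg fun x _ => mul_nonneg (hf x.1) (hg x.2)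

private lemma st12_mul_mono {f g g' : PowerSeries ℝ} (hf : ∀ m, 0 ≤ coeff m f)
    (hg : ∀ m, 0 ≤ coeff m g) (h : ∀ m, coeff m g ≤ coeff m g') :
    ∀ m, coeff m (f * g) ≤ coeff m (f * g') := by
  intro m
  rw [coeff_mul, coeff_mul]
  exact Finset.sum_le_sum fun x _ => mul_le_mul_of_nonneg_left (h x.2) (hf x.1)

private lemma st12_iter_nonneg {f : PowerSeries ℝ} (hf : ∀ m, 0 ≤ coeff m f) (k : ℕ) :
    ∀ m, 0 ≤ coeff m (derivativeFun^[k] f) := by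
  induction k with
  | zero => simpa using hf
  | succ k ih =>
    intro m
    rw [Function.iterate_succ_apply', st12_coeff_derivativeFun]
    exact mul_nonneg (ih (m + 1)) (by positivity)

private lemma st12_prod_nonneg : ∀ (n : ℕ) (g : Fin n → PowerSeries ℝ),
    (∀ i m, 0 ≤ coeff m (g i)) → ∀ m, 0 ≤ coeff m (∏ i, g i) := by
  intro n
  induction n with
  | zero => intro g _ m; simp [coeff_one]; positivity
  | succ n ih =>
    intro g hg m
    rw [Fin.prod_univ_succ]
    exact st12_mul_nonneg (hg 0) (ih _ (fun i m => hg i.succ m)) m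

private lemma st12_multinomial_cons (n a : ℕ) (f : Fin n → ℕ) :
    Nat.multinomial Finset.univ (Fin.cons a f : Fin (n + 1) → ℕ) =
      (a + ∑ i, f i).choose a * Nat.multinomial Finset.univ f := by
  have h1 : ∑ i, (Fin.cons a f : Fin (n + 1) → ℕ) i = a + ∑ i, f i := by
    simp [Fin.sum_univ_succ]
  have h2 : ∏ i, Nat.factorial ((Fin.cons a f : Fin (n + 1) → ℕ) i) =
      Nat.factorial a * ∏ i, Nat.factorial (f i) := by
    simp [Fin.prod_univ_succ]
  have hd : ∏ i, Nat.factorial ((Fin.cons a f : Fin (n + 1) → ℕ) i) ∣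
      Nat.factorial (∑ i, (Fin.cons a f : Fin (n + 1) → ℕ) i) :=
    Nat.prod_factorial_dvd_factorial_sum _ _
  rw [h1, h2] at hd
  rw [Nat.multinomial, Nat.multinomial, h1, h2]
  rw [Nat.div_eq_iff_eq_mul_left (by positivity) hd]
  have hspec : Nat.factorial (∑ i, f i) / (∏ i, Nat.factorial (f i)) *
      ∏ i, Nat.factorial (f i) = Nat.factorial (∑ i, f i) := by
    rw [mul_comm]
    exact Nat.multinomial_spec _ _
  calc Nat.factorial (a + ∑ i, f i)
      = (a + ∑ i, f i).choose a * Nat.factorial a * Nat.factorial (∑ i, f i) := by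
        have h := Nat.choose_mul_factorial_mul_factorial (Nat.le_add_right a (∑ i, f i))
        rw [Nat.add_sub_cancel_left] at h
        exact h.symm
    _ = (a + ∑ i, f i).choose a * (Nat.factorial (∑ i, f i) / ∏ i, Nat.factorial (f i)) *
        (Nat.factorial a * ∏ i, Nat.factorial (f i)) := by
        rw [mul_assoc, mul_assoc]
        congr 1
        rw [← mul_assoc, mul_comm _ (Nat.factorial a), mul_assoc, hspec]

private lemma st12_sum_adT_succ {M : Type*} [AddCommMonoid M] (n ℓ : ℕ)
    (g : (Fin (n + 1) → ℕ) → M) :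
    ∑ f ∈ Finset.Nat.antidiagonalTuple (n + 1) ℓ, g f =
      ∑ p ∈ Finset.HasAntidiagonal.antidiagonal ℓ, ∑ f ∈ Finset.Nat.antidiagonalTuple n p.2,
        g (Fin.cons p.1 f) := by
  rw [← Finset.sum_sigma ((Finset.HasAntidiagonal.antidiagonal ℓ))
    (fun p => Finset.Nat.antidiagonalTuple n p.2) (fun x => g (Fin.cons x.1.1 x.2))]
  refine Finset.sum_nbij' (fun f => ⟨(f 0, ∑ i, Fin.tail f i), Fin.tail f⟩)
    (fun x => Fin.cons x.1.1 x.2) ?_ ?_ ?_ ?_ ?_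
  · intro f hf
    rw [Finset.Nat.mem_antidiagonalTuple] at hf
    rw [Finset.mem_sigma]
    constructor
    · rw [Finset.HasAntidiagonal.mem_antidiagonal]
      rw [← hf, Fin.sum_univ_succ]
      rfl
    · rw [Finset.Nat.mem_antidiagonalTuple]
  · intro x hx
    rw [Finset.mem_sigma, Finset.HasAntidiagonal.mem_antidiagonal, Finset.Nat.mem_antidiagonalTuple] at hx
    rw [Finset.Nat.mem_antidiagonalTuple]
    rw [Fin.sum_univ_succ, Fin.cons_zero]
    simp only [Fin.cons_succ]
    rw [hx.2, hx.1]
  · intro f _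
    exact Fin.cons_self_tail f
  · intro x hx
    rw [Finset.mem_sigma, Finset.Nat.mem_antidiagonalTuple] at hx
    refine Sigma.ext ?_ ?_
    · simp [Fin.tail_cons, hx.2]
    · simp [Fin.tail_cons]
  · intro f _
    rw [Fin.cons_self_tail]

theorem stmt_12 (θ : PowerSeries ℝ) (hpos : ∀ m : ℕ, 0 ≤ coeff m θ)
    (hθθ : ∀ m : ℕ, coeff m (derivativeFun θ * derivativeFun θ) ≤ coeff m (derivativeFun θ))
    (R : ℝ) (hR : 0 < R) (Θ : PowerSeries ℝ) (hΘ : Θ = rescale R⁻¹ θ) :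
    ∀ n : ℕ, 1 ≤ n → ∀ ℓ m : ℕ,
      coeff m (∑ f ∈ Finset.Nat.antidiagonalTuple n ℓ,
          (Nat.multinomial Finset.univ f : ℝ) • ∏ i : Fin n, derivativeFun^[f i + 1] Θ)
        ≤ R ^ (-(n:ℝ) + 1) * coeff m (derivativeFun^[ℓ + 1] Θ) := by
  have hΘpos : ∀ m, 0 ≤ coeff m Θ := by
    intro m
    rw [hΘ, coeff_rescale]
    exact mul_nonneg (pow_nonneg (inv_nonneg.2 hR.le) m) (hpos m)
  have hDk : ∀ k m, 0 ≤ coeff m (derivativeFun^[k] Θ) := fun k => st12_iter_nonneg hΘpos k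
  have hcoeffDΘ : ∀ m, coeff m (derivativeFun Θ) =
      R⁻¹ ^ (m + 1) * coeff m (derivativeFun θ) := by
    intro m
    rw [hΘ, st12_coeff_derivativeFun, coeff_rescale, st12_coeff_derivativeFun]
    ring
  have hΘ2 : ∀ m, coeff m (derivativeFun Θ * derivativeFun Θ) ≤
      coeff m (R⁻¹ • derivativeFun Θ) := by
    intro m
    rw [coeff_mul, coeff_smul, smul_eq_mul]
    have hterm : ∀ x ∈ Finset.HasAntidiagonal.antidiagonal m,
        coeff x.1 (derivativeFun Θ) * coeff x.2 (derivativeFun Θ) =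
          R⁻¹ ^ (m + 2) * (coeff x.1 (derivativeFun θ) * coeff x.2 (derivativeFun θ)) := by
      intro x hx
      rw [Finset.HasAntidiagonal.mem_antidiagonal] at hx
      rw [hcoeffDΘ, hcoeffDΘ, ← hx]
      ring
    rw [Finset.sum_congr rfl hterm, ← Finset.mul_sum, ← coeff_mul]
    calc R⁻¹ ^ (m + 2) * coeff m (derivativeFun θ * derivativeFun θ)
        ≤ R⁻¹ ^ (m + 2) * coeff m (derivativeFun θ) :=
          mul_le_mul_of_nonneg_left (hθθ m) (by positivity)
      _ = R⁻¹ * coeff m (derivativeFun Θ) := by rw [hcoeffDΘ]; ring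
  have hkey : ∀ ℓ m, coeff m (∑ x ∈ Finset.HasAntidiagonal.antidiagonal ℓ,
        (ℓ.choose x.1 : ℝ) • (derivativeFun^[x.1 + 1] Θ * derivativeFun^[x.2 + 1] Θ)) ≤
      R⁻¹ * coeff m (derivativeFun^[ℓ + 1] Θ) := by
    intro ℓ m
    have h1 : (∑ x ∈ Finset.HasAntidiagonal.antidiagonal ℓ,
        (ℓ.choose x.1 : ℝ) • (derivativeFun^[x.1 + 1] Θ * derivativeFun^[x.2 + 1] Θ)) =
        derivativeFun^[ℓ] (derivativeFun Θ * derivativeFun Θ) := by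
      rw [leib]
      exact Finset.sum_congr rfl fun x _ => by
        rw [Function.iterate_succ_apply, Function.iterate_succ_apply]
    rw [h1]
    calc coeff m (derivativeFun^[ℓ] (derivativeFun Θ * derivativeFun Θ))
        ≤ coeff m (derivativeFun^[ℓ] (R⁻¹ • derivativeFun Θ)) := coeff_iter_mono hΘ2 ℓ m
      _ = R⁻¹ * coeff m (derivativeFun^[ℓ + 1] Θ) := by
          rw [iter_smul, coeff_smul, smul_eq_mul, ← Function.iterate_succ_apply]
  intro n hn
  induction n, hn using Nat.le_induction with
  | base =>
    intro ℓ m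
    rw [Finset.Nat.antidiagonalTuple_one, Finset.sum_singleton]
    have hm1 : (Nat.multinomial (Finset.univ : Finset (Fin 1)) ![ℓ] : ℝ) = 1 := by
      norm_cast
      simp [Nat.multinomial, Nat.div_self (Nat.factorial_pos _)]
    have hp1 : (∏ i : Fin 1, derivativeFun^[(![ℓ] : Fin 1 → ℕ) i + 1] Θ) =
        derivativeFun^[ℓ + 1] Θ := by
      rw [Fin.prod_univ_one]
      norm_num
    rw [hm1, hp1, one_smul]
    have : R ^ (-((1:ℕ):ℝ) + 1) = 1 := by norm_num
    rw [this, one_mul]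
  | succ n hn ih =>
    intro ℓ m
    set S : ℕ → PowerSeries ℝ := fun b => ∑ f ∈ Finset.Nat.antidiagonalTuple n b,
      (Nat.multinomial Finset.univ f : ℝ) • ∏ i : Fin n, derivativeFun^[f i + 1] Θ with hS
    have hSnonneg : ∀ b m', 0 ≤ coeff m' (S b) := by
      intro b m'
      rw [hS, map_sum]
      refine Finset.sum_nonneg fun f _ => ?_
      rw [coeff_smul, smul_eq_mul]
      exact mul_nonneg (by positivity)
        (st12_prod_nonneg n _ (fun i m'' => hDk (f i + 1) m'') m')
    have hrw : (∑ f ∈ Finset.Nat.antidiagonalTuple (n + 1) ℓ,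
        (Nat.multinomial Finset.univ f : ℝ) • ∏ i : Fin (n + 1), derivativeFun^[f i + 1] Θ) =
        ∑ p ∈ Finset.HasAntidiagonal.antidiagonal ℓ,
          (ℓ.choose p.1 : ℝ) • (derivativeFun^[p.1 + 1] Θ * S p.2) := by
      rw [st12_sum_adT_succ n ℓ (fun f =>
        (Nat.multinomial Finset.univ f : ℝ) • ∏ i : Fin (n + 1), derivativeFun^[f i + 1] Θ)]
      refine Finset.sum_congr rfl fun p hp => ?_
      rw [Finset.HasAntidiagonal.mem_antidiagonal] at hp
      rw [hS]
      dsimp only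
      rw [Finset.mul_sum, Finset.smul_sum]
      refine Finset.sum_congr rfl fun f hf => ?_
      rw [Finset.Nat.mem_antidiagonalTuple] at hf
      have hprod : (∏ i : Fin (n + 1), derivativeFun^[(Fin.cons p.1 f : Fin (n+1) → ℕ) i + 1] Θ) =
          derivativeFun^[p.1 + 1] Θ * ∏ i : Fin n, derivativeFun^[f i + 1] Θ := by
        rw [Fin.prod_univ_succ]
        simp only [Fin.cons_zero, Fin.cons_succ]
      have hmul : Nat.multinomial Finset.univ (Fin.cons p.1 f : Fin (n+1) → ℕ) =
          ℓ.choose p.1 * Nat.multinomial Finset.univ f := by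
        rw [st12_multinomial_cons, hf, hp]
      rw [hprod, hmul]
      push_cast
      rw [mul_smul, mul_smul_comm]
    rw [hrw, map_sum]
    have hbound : ∀ p ∈ Finset.HasAntidiagonal.antidiagonal ℓ,
        coeff m ((ℓ.choose p.1 : ℝ) • (derivativeFun^[p.1 + 1] Θ * S p.2)) ≤
        R ^ (-(n:ℝ) + 1) * coeff m ((ℓ.choose p.1 : ℝ) •
          (derivativeFun^[p.1 + 1] Θ * derivativeFun^[p.2 + 1] Θ)) := by
      intro p _
      rw [coeff_smul, coeff_smul, smul_eq_mul, smul_eq_mul, mul_left_comm]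
      refine mul_le_mul_of_nonneg_left ?_ (by positivity)
      have hle : ∀ m', coeff m' (S p.2) ≤
          coeff m' (R ^ (-(n:ℝ) + 1) • derivativeFun^[p.2 + 1] Θ) := by
        intro m'
        rw [coeff_smul, smul_eq_mul]
        exact ih p.2 m'
      calc coeff m (derivativeFun^[p.1 + 1] Θ * S p.2)
          ≤ coeff m (derivativeFun^[p.1 + 1] Θ *
              (R ^ (-(n:ℝ) + 1) • derivativeFun^[p.2 + 1] Θ)) :=
            st12_mul_mono (hDk (p.1 + 1)) (hSnonneg p.2) hle m
        _ = R ^ (-(n:ℝ) + 1) * coeff m (derivativeFun^[p.1 + 1] Θ *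
              derivativeFun^[p.2 + 1] Θ) := by
            rw [mul_smul_comm, coeff_smul, smul_eq_mul]
    calc (∑ p ∈ Finset.HasAntidiagonal.antidiagonal ℓ, coeff m
          ((ℓ.choose p.1 : ℝ) • (derivativeFun^[p.1 + 1] Θ * S p.2)))
        ≤ ∑ p ∈ Finset.HasAntidiagonal.antidiagonal ℓ, R ^ (-(n:ℝ) + 1) * coeff m
            ((ℓ.choose p.1 : ℝ) • (derivativeFun^[p.1 + 1] Θ * derivativeFun^[p.2 + 1] Θ)) :=
          Finset.sum_le_sum hbound
      _ = R ^ (-(n:ℝ) + 1) * coeff m (∑ p ∈ Finset.HasAntidiagonal.antidiagonal ℓ,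
            (ℓ.choose p.1 : ℝ) • (derivativeFun^[p.1 + 1] Θ * derivativeFun^[p.2 + 1] Θ)) := by
          rw [map_sum, Finset.mul_sum]
      _ ≤ R ^ (-(n:ℝ) + 1) * (R⁻¹ * coeff m (derivativeFun^[ℓ + 1] Θ)) :=
          mul_le_mul_of_nonneg_left (hkey ℓ m) (by positivity)
      _ = R ^ (-((n:ℕ)+1:ℝ) + 1) * coeff m (derivativeFun^[ℓ + 1] Θ) := by
          rw [← mul_assoc]
          congr 1
          rw [← Real.rpow_neg_one R, ← Real.rpow_add hR]
          congr 1
          ring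
      _ = R ^ (-((n+1:ℕ):ℝ) + 1) * coeff m (derivativeFun^[ℓ + 1] Θ) := by push_cast; ring_nf
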